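/- The Grams monoid G = ⟨1/(2^n · p_n) : n ∈ ℕ⟩, where p_n is the n-th odd prime, does not satisfy the ACCP; specifically, the chain of principal ideals 1/2^n + G is strictly increasing and does not stabilize. -/

import Mathlib

/-- The Grams monoid: the additive submonoid of `ℚ` generated by `1 / (2^n * p_n)`
for `n ≥ 1`, where `p_n = Nat.nth Nat.Prime n` is the `n`-th odd prime. -/
def GramsMonoid : AddSubmonoid ℚ :=
  AddSubmonoid.closure
    {q : ℚ | ∃ n : ℕ, 1 ≤ n ∧ q = 1 / (2 ^ n * (Nat.nth Nat.Prime n : ℚ))}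

lemma gramsMonoid_pow_mem (n : ℕ) : (1 : ℚ) / 2 ^ n ∈ GramsMonoid := by
  have hp := Nat.prime_nth_prime (n + 1)
  have hppos : (0 : ℚ) < (Nat.nth Nat.Prime (n + 1) : ℚ) := by
    exact_mod_cast hp.pos
  have hg : (1 : ℚ) / (2 ^ (n + 1) * (Nat.nth Nat.Prime (n + 1) : ℚ)) ∈ GramsMonoid :=
    AddSubmonoid.subset_closure ⟨n + 1, Nat.le_add_left 1 n, rfl⟩
  have hm := GramsMonoid.nsmul_mem hg (2 * Nat.nth Nat.Prime (n + 1))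
  have : ((2 * Nat.nth Nat.Prime (n + 1)) • ((1 : ℚ) / (2 ^ (n + 1) * (Nat.nth Nat.Prime (n + 1) : ℚ)))) = 1 / 2 ^ n := by
    rw [nsmul_eq_mul]
    push_cast
    field_simp
    ring
  rwa [this] at hm

lemma gramsMonoid_nonneg : ∀ x ∈ GramsMonoid, (0 : ℚ) ≤ x := by
  intro x hx
  induction hx using AddSubmonoid.closure_induction with
  | mem q hq =>
    obtain ⟨n, hn, rfl⟩ := hq
    positivity
  | zero => exact le_refl 0
  | add a b _ _ ha hb => exact add_nonneg ha hb

theorem gramsMonoid_not_accp :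
    (∀ n : ℕ, (1 : ℚ) / 2 ^ n ∈ GramsMonoid) ∧
    (∀ n : ℕ, ∃ d ∈ GramsMonoid, (1 : ℚ) / 2 ^ n = 1 / 2 ^ (n + 1) + d) ∧
    (∀ n : ℕ, ¬ ∃ d ∈ GramsMonoid, (1 : ℚ) / 2 ^ (n + 1) = 1 / 2 ^ n + d) := by
  refine ⟨gramsMonoid_pow_mem, fun n => ⟨1 / 2 ^ (n + 1), gramsMonoid_pow_mem _, ?_⟩, ?_⟩
  · rw [pow_succ]; field_simp; ring
  · rintro n ⟨d, hd, heq⟩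
    have hdn := gramsMonoid_nonneg d hd
    have h2 : (0 : ℚ) < 2 ^ n := by positivity
    rw [pow_succ] at heq
    have hlt : (1 : ℚ) / (2 ^ n * 2) < 1 / 2 ^ n := by
      rw [div_lt_div_iff₀ (by positivity) h2]; nlinarith
    linarith
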